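/- If F ⊆ P([n]) is a family of subsets and for each i ∈ [n], S_i ⊆ P(ω_i) is a family whose weight enumerator is bounded above by a polynomial p(x) with nonnegative coefficients on an interval I ⊆ ℝ≥0, then the weight enumerator of the composed family F • {S_i} is bounded above by W_F(p(x)) for all x ∈ I. -/

import Mathlib

open Finset Polynomial

/-- Weight enumerator of a family of subsets, evaluated at a real `x`:
`W_F(x) = ∑_{f ∈ F} x^{|f|}`. -/
noncomputable def wEval {α : Type*} (F : Finset (Finset α)) (x : ℝ) : ℝ :=
  ∑ f ∈ F, x ^ f.card

/-- The composed family `F • {S_i}` on the disjoint union `⊔_i ω_i`: for each `f ∈ F`,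
take all sets of the form `⊔_{i ∈ f} g_i` where `g_i ∈ S_i` for `i ∈ f`. -/
noncomputable def compFamily {n : ℕ} {ω : Fin n → Type*} [∀ i, DecidableEq (ω i)]
    (F : Finset (Finset (Fin n))) (S : ∀ i, Finset (Finset (ω i))) :
    Finset (Finset ((i : Fin n) × ω i)) :=
  F.biUnion fun f =>
    (f.pi fun i => S i).image fun g =>
      f.attach.biUnion fun i =>
        (g i.1 i.2).map ⟨Sigma.mk i.1, sigma_mk_injective⟩

private lemma sum_biUnion_le' {α β : Type*} [DecidableEq β] (s : Finset α)
    (t : α → Finset β) (f : β → ℝ) (hf : ∀ b, 0 ≤ f b) :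
    ∑ b ∈ s.biUnion t, f b ≤ ∑ a ∈ s, ∑ b ∈ t a, f b := by
  classical
  induction s using Finset.induction with
  | empty => simp
  | insert _ _ ha ih =>
    rename_i a s
    rw [Finset.biUnion_insert, Finset.sum_insert ha]
    calc ∑ b ∈ t a ∪ s.biUnion t, f b
        ≤ ∑ b ∈ t a, f b + ∑ b ∈ s.biUnion t, f b := by
          have := Finset.sum_union_inter (s₁ := t a) (s₂ := s.biUnion t) (f := f)
          have h2 : 0 ≤ ∑ b ∈ t a ∩ s.biUnion t, f b :=
            Finset.sum_nonneg fun b _ => hf b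
          linarith
      _ ≤ _ := by linarith

private lemma sum_image_le' {α β : Type*} [DecidableEq β] (s : Finset α)
    (g : α → β) (f : β → ℝ) (hf : ∀ b, 0 ≤ f b) :
    ∑ b ∈ s.image g, f b ≤ ∑ a ∈ s, f (g a) := by
  classical
  induction s using Finset.induction with
  | empty => simp
  | insert _ _ ha ih =>
    rename_i a s
    rw [Finset.image_insert, Finset.sum_insert ha]
    by_cases h : g a ∈ s.image g
    · rw [Finset.insert_eq_self.2 h]
      have := hf (g a); linarith
    · rw [Finset.sum_insert h]; linarith

set_option maxHeartbeats 1000000 in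
/-- Composition of weight enumerators: if each `W_{S_i}` is bounded above by a polynomial
`p` with nonnegative coefficients on an interval `I ⊆ ℝ≥0`, then the weight enumerator of
the composed family `F • {S_i}` is bounded above by `W_F(p(x))` on `I`. -/
theorem stmt1 {n : ℕ} {ω : Fin n → Type*} [∀ i, DecidableEq (ω i)]
    (F : Finset (Finset (Fin n))) (S : ∀ i, Finset (Finset (ω i)))
    (p : Polynomial ℝ) (hp : ∀ k, 0 ≤ p.coeff k)
    (I : Set ℝ) (hI : I ⊆ Set.Ici (0 : ℝ))
    (hS : ∀ i, ∀ x ∈ I, wEval (S i) x ≤ p.eval x) :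
    ∀ x ∈ I, wEval (compFamily F S) x ≤ wEval F (p.eval x) := by
  intro x hx
  have hx0 : 0 ≤ x := hI hx
  have hfx : ∀ u : Finset ((i : Fin n) × ω i), 0 ≤ x ^ u.card :=
    fun u => pow_nonneg hx0 _
  unfold wEval compFamily
  calc ∑ u ∈ F.biUnion (fun f => (f.pi fun i => S i).image fun g =>
          f.attach.biUnion fun i =>
            (g i.1 i.2).map ⟨Sigma.mk i.1, sigma_mk_injective⟩), x ^ u.card
      ≤ ∑ f ∈ F, ∑ u ∈ (f.pi fun i => S i).image
          (fun g => f.attach.biUnion fun i =>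
            (g i.1 i.2).map ⟨Sigma.mk i.1, sigma_mk_injective⟩), x ^ u.card :=
        sum_biUnion_le' _ _ _ hfx
    _ ≤ ∑ f ∈ F, (p.eval x) ^ f.card := by
        apply Finset.sum_le_sum
        intro f _
        calc ∑ u ∈ (f.pi fun i => S i).image
              (fun g => f.attach.biUnion fun i =>
                (g i.1 i.2).map ⟨Sigma.mk i.1, sigma_mk_injective⟩), x ^ u.card
            ≤ ∑ g ∈ f.pi fun i => S i,
              x ^ (f.attach.biUnion fun i =>
                (g i.1 i.2).map ⟨Sigma.mk i.1, sigma_mk_injective⟩).card :=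
              sum_image_le' _ _ _ hfx
          _ = ∑ g ∈ f.pi fun i => S i, ∏ i ∈ f.attach, x ^ (g i.1 i.2).card := by
              apply Finset.sum_congr rfl
              intro g _
              rw [Finset.card_biUnion, ← Finset.prod_pow_eq_pow_sum]
              · exact Finset.prod_congr rfl fun i _ => by rw [Finset.card_map]
              · intro i _ j _ hij
                simp only [Finset.disjoint_left, Finset.mem_map,
                  Function.Embedding.coeFn_mk]
                rintro a ⟨b, _, rfl⟩ ⟨c, _, hc⟩
                exact hij (Subtype.ext (congrArg Sigma.fst hc).symm)
          _ = ∏ i ∈ f, ∑ g ∈ S i, x ^ g.card := (Finset.prod_sum f (fun i => S i) (fun i b => x ^ b.card)).symm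
          _ ≤ ∏ i ∈ f, p.eval x := by
              apply Finset.prod_le_prod
              · intro i _
                exact Finset.sum_nonneg fun g _ => pow_nonneg hx0 _
              · intro i _
                exact hS i x hx
          _ = (p.eval x) ^ f.card := Finset.prod_const _
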